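/- For every pair of configurations (η, ζ), every integer l ≥ 1 and all integers m ≤ n, the basic-coupling generator applied to the discrepancy-run counter satisfies the corrected estimate Ω̃ g^l_{m,n}(η,ζ) ≥ ε · ( g^{l+1}_{m,n}(η,ζ) − 2 g^l_{m,n}(η,ζ) ) − 4 K l · g^l_{m,n}(η,ζ). -/

import Mathlib

/-- `ξ` has a maximal `l`-run of sign `s` at `a` within `[m, n]`:
`ξ (a+i) = s` for `0 ≤ i ≤ l-1`, `ξ (a-1) ≠ s`, `ξ (a+l) ≠ s`, `m ≤ a`, `a+l-1 ≤ n`. -/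
def IsMaxRun (ξ : ℤ → ℤ) (l m n a s : ℤ) : Prop :=
  (∀ i : ℤ, 0 ≤ i → i ≤ l - 1 → ξ (a + i) = s) ∧
    ξ (a - 1) ≠ s ∧ ξ (a + l) ≠ s ∧ m ≤ a ∧ a + l - 1 ≤ n

/-- `g^l_{m,n}(ξ)`: the number of pairs `(a, s)` with `s ∈ {−1, 1}` such that
`ξ` has a maximal `l`-run of sign `s` at `a` within `[m, n]`. -/
noncomputable def runCount (l m n : ℤ) (ξ : ℤ → ℤ) : ℕ :=
  Set.ncard {p : ℤ × ℤ | (p.2 = 1 ∨ p.2 = -1) ∧ IsMaxRun ξ l m n p.1 p.2}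

/-- Flip the spin of `η` at site `x`. -/
def flipAt (η : ℤ → Bool) (x : ℤ) : ℤ → Bool := Function.update η x (!η x)

/-- The discrepancy configuration `ξ_{η,ζ}(x) = η(x) − ζ(x)` with values in `{−1,0,1}`. -/
def discrep (η ζ : ℤ → Bool) : ℤ → ℤ :=
  fun x => (if η x then 1 else 0) - (if ζ x then 1 else 0)

/-- `g^l_{m,n}(η, ζ) = g^l_{m,n}(ξ_{η,ζ})`. -/
noncomputable def gPair (l m n : ℤ) (η ζ : ℤ → Bool) : ℕ :=
  runCount l m n (discrep η ζ)

/-- The nearest-neighbor flip rate `c(x, η) = F(η(x−1), η(x), η(x+1))`. -/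
def rate (F : Bool → Bool → Bool → ℝ) (x : ℤ) (η : ℤ → Bool) : ℝ :=
  F (η (x - 1)) (η x) (η (x + 1))

/-- The basic-coupling generator applied to `g^l_{m,n}`, written as a finite
sum over the sites `x ∈ [m−1, n+1]` (flips at other sites do not change `g^l_{m,n}`). -/
noncomputable def omegaG (F : Bool → Bool → Bool → ℝ) (l m n : ℤ) (η ζ : ℤ → Bool) : ℝ :=
  ∑ x ∈ Finset.Icc (m - 1) (n + 1),
    ((min (rate F x η) (rate F x ζ)) *
        ((gPair l m n (flipAt η x) (flipAt ζ x) : ℝ) - (gPair l m n η ζ : ℝ)) +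
      (rate F x η - min (rate F x η) (rate F x ζ)) *
        ((gPair l m n (flipAt η x) ζ : ℝ) - (gPair l m n η ζ : ℝ)) +
      (rate F x ζ - min (rate F x η) (rate F x ζ)) *
        ((gPair l m n η (flipAt ζ x) : ℝ) - (gPair l m n η ζ : ℝ)))

def runSet (l m n : ℤ) (ξ : ℤ → ℤ) : Set (ℤ × ℤ) :=
  {p : ℤ × ℤ | (p.2 = 1 ∨ p.2 = -1) ∧ IsMaxRun ξ l m n p.1 p.2}

lemma runCount_eq (l m n : ℤ) (ξ : ℤ → ℤ) : runCount l m n ξ = (runSet l m n ξ).ncard := rfl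

lemma runSet_finite (l m n : ℤ) (hl : 1 ≤ l) (ξ : ℤ → ℤ) : (runSet l m n ξ).Finite := by
  apply Set.Finite.subset ((Set.finite_Icc m n).prod ((Set.finite_singleton (-1:ℤ)).insert 1))
  rintro ⟨a, s⟩ ⟨hs, h1, h2, h3, h4, h5⟩
  exact ⟨⟨h4, by omega⟩, by rcases hs with h | h <;> simp_all⟩

lemma isMaxRun_congr {ξ ξ' : ℤ → ℤ} {l m n a s : ℤ} (hl : 1 ≤ l)
    (h : ∀ y, a - 1 ≤ y → y ≤ a + l → ξ y = ξ' y) (hr : IsMaxRun ξ l m n a s) :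
    IsMaxRun ξ' l m n a s := by
  obtain ⟨h1, h2, h3, h4, h5⟩ := hr
  refine ⟨fun i hi hi' => ?_, ?_, ?_, h4, h5⟩
  · rw [← h (a + i) (by omega) (by omega)]; exact h1 i hi hi'
  · rw [← h (a - 1) (by omega) (by omega)]; exact h2
  · rw [← h (a + l) (by omega) (by omega)]; exact h3

lemma mem_runSet_update {ξ : ℤ → ℤ} {l m n x v : ℤ} (hl : 1 ≤ l) {p : ℤ × ℤ}
    (hp : p ∈ runSet l m n ξ) (hx : ¬ (p.1 - 1 ≤ x ∧ x ≤ p.1 + l)) :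
    p ∈ runSet l m n (Function.update ξ x v) := by
  refine ⟨hp.1, isMaxRun_congr hl (fun y hy hy' => ?_) hp.2⟩
  rw [Function.update_of_ne (by omega)]

/-- runs that may be affected by a flip at `x`. -/
def badSet (l m n x : ℤ) (ξ : ℤ → ℤ) : Set (ℤ × ℤ) :=
  {p ∈ runSet l m n ξ | p.1 - 1 ≤ x ∧ x ≤ p.1 + l}

lemma badSet_subset (l m n x : ℤ) (ξ : ℤ → ℤ) : badSet l m n x ξ ⊆ runSet l m n ξ :=
  fun _ hp => hp.1

lemma runCount_update_ge {l m n x v : ℤ} {ξ : ℤ → ℤ} (hl : 1 ≤ l) :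
    (runCount l m n ξ : ℝ) - ((badSet l m n x ξ).ncard : ℝ)
      ≤ (runCount l m n (Function.update ξ x v) : ℝ) := by
  have hsub : runSet l m n ξ ⊆ runSet l m n (Function.update ξ x v) ∪ badSet l m n x ξ := by
    intro p hp
    by_cases hx : p.1 - 1 ≤ x ∧ x ≤ p.1 + l
    · exact Or.inr ⟨hp, hx⟩
    · exact Or.inl (mem_runSet_update hl hp hx)
  have hfin : (runSet l m n (Function.update ξ x v) ∪ badSet l m n x ξ).Finite :=
    (runSet_finite l m n hl _).union ((runSet_finite l m n hl ξ).subset (badSet_subset _ _ _ _ _))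
  have h1 := Set.ncard_le_ncard hsub hfin
  have h2 := Set.ncard_union_le (runSet l m n (Function.update ξ x v)) (badSet l m n x ξ)
  rw [runCount_eq, runCount_eq]
  have : (runSet l m n ξ).ncard ≤ (runSet l m n (Function.update ξ x v)).ncard +
      (badSet l m n x ξ).ncard := le_trans h1 h2
  linarith [(Nat.cast_le (α := ℝ)).2 this, Nat.cast_add (R := ℝ)
    (runSet l m n (Function.update ξ x v)).ncard (badSet l m n x ξ).ncard]

lemma runCount_update_flip_ge {l m n x s : ℤ} {ξ : ℤ → ℤ} (hl : 1 ≤ l)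
    (hs : s = 1 ∨ s = -1) (hrun : IsMaxRun ξ (l + 1) m n x s) :
    (runCount l m n ξ : ℝ) + 1 - ((badSet l m n x ξ).ncard : ℝ)
      ≤ (runCount l m n (Function.update ξ x (-(ξ x))) : ℝ) := by
  set ξ' := Function.update ξ x (-(ξ x)) with hξ'
  obtain ⟨h1, h2, h3, h4, h5⟩ := hrun
  have hξx : ξ x = s := by have := h1 0 le_rfl (by omega); simpa using this
  -- the new run (x+1, s) in ξ'
  have hnew : (x + 1, s) ∈ runSet l m n ξ' := by
    refine ⟨hs, fun i hi hi' => ?_, ?_, ?_, by omega, by omega⟩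
    · show ξ' (x + 1 + i) = s
      rw [hξ', Function.update_of_ne (by omega)]
      have := h1 (i + 1) (by omega) (by omega)
      rwa [show x + (i + 1) = x + 1 + i by ring] at this
    · show ξ' (x + 1 - 1) ≠ s
      rw [show x + 1 - 1 = x by ring, hξ', Function.update_self, hξx]
      rcases hs with h | h <;> omega
    · show ξ' (x + 1 + l) ≠ s
      rw [hξ', Function.update_of_ne (by omega)]
      rwa [show x + (l + 1) = x + 1 + l by ring] at h3
  have hnotold : (x + 1, s) ∉ runSet l m n ξ := by
    rintro ⟨-, -, hb, -⟩
    exact hb (by rwa [show x + 1 - 1 = x by ring])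
  have hsub : insert (x + 1, s) (runSet l m n ξ \ badSet l m n x ξ) ⊆ runSet l m n ξ' := by
    rintro p (rfl | ⟨hp, hpb⟩)
    · exact hnew
    · exact mem_runSet_update hl hp (fun hc => hpb ⟨hp, hc⟩)
  have hfinξ := runSet_finite l m n hl ξ
  have hfinξ' := runSet_finite l m n hl ξ'
  have hcard1 : (insert (x + 1, s) (runSet l m n ξ \ badSet l m n x ξ)).ncard
      = (runSet l m n ξ \ badSet l m n x ξ).ncard + 1 :=
    Set.ncard_insert_of_notMem (fun h => hnotold h.1) (hfinξ.diff (t := badSet l m n x ξ))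
  have hcard2 : (runSet l m n ξ \ badSet l m n x ξ).ncard + (badSet l m n x ξ).ncard
      = (runSet l m n ξ).ncard :=
    Set.ncard_diff_add_ncard_of_subset (badSet_subset l m n x ξ) hfinξ
  have hle : (insert (x + 1, s) (runSet l m n ξ \ badSet l m n x ξ)).ncard
      ≤ (runSet l m n ξ').ncard := Set.ncard_le_ncard hsub hfinξ'
  rw [runCount_eq, runCount_eq]
  rw [hcard1] at hle
  have := (Nat.cast_le (α := ℝ)).2 hle
  push_cast at this
  have h2' : ((runSet l m n ξ \ badSet l m n x ξ).ncard : ℝ) + ((badSet l m n x ξ).ncard : ℝ)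
      = ((runSet l m n ξ).ncard : ℝ) := by exact_mod_cast congrArg (Nat.cast (R := ℝ)) hcard2
  linarith

open Finset in
lemma sum_badSet_le {l m n : ℤ} {ξ : ℤ → ℤ} (hl : 1 ≤ l) :
    ∑ x ∈ Finset.Icc (m - 1) (n + 1), ((badSet l m n x ξ).ncard : ℝ)
      ≤ ((l : ℝ) + 2) * (runCount l m n ξ : ℝ) := by
  classical
  set S : Finset (ℤ × ℤ) := (runSet_finite l m n hl ξ).toFinset with hS
  have hbad : ∀ x, (badSet l m n x ξ).ncard
      = (S.filter (fun p => p.1 - 1 ≤ x ∧ x ≤ p.1 + l)).card := by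
    intro x
    rw [← Set.ncard_coe_finset]
    congr 1
    ext p
    simp only [Finset.coe_filter, Set.Finite.mem_toFinset, hS, Set.mem_setOf_eq]
    exact Iff.rfl
  calc ∑ x ∈ Finset.Icc (m - 1) (n + 1), ((badSet l m n x ξ).ncard : ℝ)
      = ∑ x ∈ Finset.Icc (m - 1) (n + 1), ∑ p ∈ S,
          (if p.1 - 1 ≤ x ∧ x ≤ p.1 + l then (1:ℝ) else 0) := by
        refine Finset.sum_congr rfl (fun x _ => ?_)
        rw [hbad x, Finset.card_filter]
        push_cast
        rfl
    _ = ∑ p ∈ S, ∑ x ∈ Finset.Icc (m - 1) (n + 1),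
          (if p.1 - 1 ≤ x ∧ x ≤ p.1 + l then (1:ℝ) else 0) := Finset.sum_comm
    _ ≤ ∑ p ∈ S, ((l : ℝ) + 2) := by
        refine Finset.sum_le_sum (fun p _ => ?_)
        calc ∑ x ∈ Finset.Icc (m - 1) (n + 1),
              (if p.1 - 1 ≤ x ∧ x ≤ p.1 + l then (1:ℝ) else 0)
            ≤ ∑ x ∈ Finset.Icc (m - 1) (n + 1) ∩ Finset.Icc (p.1 - 1) (p.1 + l), 1 := by
              rw [← Finset.sum_filter]
              apply Finset.sum_le_sum_of_subset_of_nonneg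
              · intro y hy
                simp only [Finset.mem_filter, Finset.mem_inter, Finset.mem_Icc] at hy ⊢
                omega
              · intros; norm_num
          _ ≤ ((l : ℝ) + 2) := by
              rw [Finset.sum_const, nsmul_eq_mul, mul_one]
              have h1 : (Finset.Icc (m - 1) (n + 1) ∩ Finset.Icc (p.1 - 1) (p.1 + l)).card
                  ≤ (Finset.Icc (p.1 - 1) (p.1 + l)).card :=
                Finset.card_le_card (Finset.inter_subset_right)
              have h2 : (Finset.Icc (p.1 - 1) (p.1 + l)).card = (l + 2).toNat := by
                rw [Int.card_Icc]; congr 1; ring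
              have : ((Finset.Icc (m - 1) (n + 1) ∩ Finset.Icc (p.1 - 1) (p.1 + l)).card : ℝ)
                  ≤ ((l + 2).toNat : ℝ) := by exact_mod_cast le_trans h1 (le_of_eq h2)
              calc ((Finset.Icc (m - 1) (n + 1) ∩ Finset.Icc (p.1 - 1) (p.1 + l)).card : ℝ)
                  ≤ ((l + 2).toNat : ℝ) := this
                _ = ((l : ℝ) + 2) := by
                    have h3 : ((l + 2).toNat : ℤ) = l + 2 := Int.toNat_of_nonneg (by omega)
                    exact_mod_cast congrArg (fun z : ℤ => (z : ℝ)) h3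
    _ = ((l : ℝ) + 2) * (runCount l m n ξ : ℝ) := by
        rw [Finset.sum_const, nsmul_eq_mul, mul_comm]
        congr 1
        rw [runCount_eq, Set.ncard_eq_toFinset_card _ (runSet_finite l m n hl ξ)]

open Classical in
/-- Indicator that `ξ` has a maximal `l`-run (of some sign) starting at `x`. -/
noncomputable def hasRunInd (l m n x : ℤ) (ξ : ℤ → ℤ) : ℝ :=
  if ∃ s : ℤ, (s = 1 ∨ s = -1) ∧ IsMaxRun ξ l m n x s then 1 else 0

lemma hasRunInd_nonneg (l m n x : ℤ) (ξ : ℤ → ℤ) : 0 ≤ hasRunInd l m n x ξ := by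
  unfold hasRunInd; split <;> norm_num

lemma runCount_le_sum_ind {l m n : ℤ} {ξ : ℤ → ℤ} (hl : 1 ≤ l) :
    (runCount l m n ξ : ℝ) ≤ ∑ x ∈ Finset.Icc (m - 1) (n + 1), hasRunInd l m n x ξ := by
  classical
  set S : Finset (ℤ × ℤ) := (runSet_finite l m n hl ξ).toFinset with hS
  set E : Finset ℤ := S.image Prod.fst with hE
  have hmem : ∀ p ∈ S, p ∈ runSet l m n ξ := by
    intro p hp; rwa [hS, Set.Finite.mem_toFinset] at hp
  have hinj : Set.InjOn Prod.fst (S : Set (ℤ × ℤ)) := by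
    intro p hp q hq hpq
    obtain ⟨-, hp1, -⟩ := hmem p hp
    obtain ⟨-, hq1, -⟩ := hmem q hq
    have h1 : ξ (p.1 + 0) = p.2 := hp1 0 le_rfl (by omega)
    have h2 : ξ (q.1 + 0) = q.2 := hq1 0 le_rfl (by omega)
    have : p.2 = q.2 := by rw [← h1, ← h2, hpq]
    exact Prod.ext hpq this
  have hcardE : E.card = S.card := Finset.card_image_of_injOn hinj
  have hsub : E ⊆ Finset.Icc (m - 1) (n + 1) := by
    intro y hy
    rw [hE, Finset.mem_image] at hy
    obtain ⟨p, hp, rfl⟩ := hy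
    obtain ⟨-, -, -, -, h4, h5⟩ := hmem p hp
    rw [Finset.mem_Icc]; omega
  have hone : ∀ y ∈ E, hasRunInd l m n y ξ = 1 := by
    intro y hy
    rw [hE, Finset.mem_image] at hy
    obtain ⟨p, hp, rfl⟩ := hy
    obtain ⟨hs, hrun⟩ := hmem p hp
    unfold hasRunInd
    rw [if_pos ⟨p.2, hs, hrun⟩]
  calc (runCount l m n ξ : ℝ) = (S.card : ℝ) := by
        rw [runCount_eq, Set.ncard_eq_toFinset_card _ (runSet_finite l m n hl ξ)]
    _ = ∑ y ∈ E, hasRunInd l m n y ξ := by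
        rw [Finset.sum_congr rfl hone, Finset.sum_const, nsmul_eq_mul, mul_one, hcardE]
    _ ≤ ∑ x ∈ Finset.Icc (m - 1) (n + 1), hasRunInd l m n x ξ :=
        Finset.sum_le_sum_of_subset_of_nonneg hsub
          (fun x _ _ => hasRunInd_nonneg l m n x ξ)

lemma discrep_flip_flip (η ζ : ℤ → Bool) (x : ℤ) :
    discrep (flipAt η x) (flipAt ζ x)
      = Function.update (discrep η ζ) x (-(discrep η ζ x)) := by
  funext y
  by_cases hy : y = x
  · subst hy
    simp only [Function.update_self, discrep, flipAt]
    cases η y <;> cases ζ y <;> norm_num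
  · simp [discrep, flipAt, Function.update_of_ne hy]

lemma discrep_flip_left (η ζ : ℤ → Bool) (x : ℤ) :
    discrep (flipAt η x) ζ
      = Function.update (discrep η ζ) x (discrep (flipAt η x) ζ x) := by
  funext y
  by_cases hy : y = x
  · subst hy; rw [Function.update_self]
  · simp [discrep, flipAt, Function.update_of_ne hy]

lemma discrep_flip_right (η ζ : ℤ → Bool) (x : ℤ) :
    discrep η (flipAt ζ x)
      = Function.update (discrep η ζ) x (discrep η (flipAt ζ x) x) := by
  funext y
  by_cases hy : y = x
  · subst hy; rw [Function.update_self]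
  · simp [discrep, flipAt, Function.update_of_ne hy]


theorem generator_estimate (F : Bool → Bool → Bool → ℝ) (ε K : ℝ)
    (hε : 0 < ε) (hεK : ε ≤ K)
    (hF : ∀ u v w : Bool, ε ≤ F u v w ∧ F u v w ≤ K)
    (l m n : ℤ) (hl : 1 ≤ l) (hmn : m ≤ n) (η ζ : ℤ → Bool) :
    omegaG F l m n η ζ ≥
      ε * ((gPair (l + 1) m n η ζ : ℝ) - 2 * (gPair l m n η ζ : ℝ)) -
        4 * K * (l : ℝ) * (gPair l m n η ζ : ℝ) := by
  classical
  set ξ : ℤ → ℤ := discrep η ζ with hξ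
  have hK0 : 0 ≤ K := le_trans hε.le hεK
  have hg0 : (0:ℝ) ≤ (gPair l m n η ζ : ℝ) := Nat.cast_nonneg _
  have key : ∀ x ∈ Finset.Icc (m - 1) (n + 1),
      ε * hasRunInd (l + 1) m n x ξ - K * ((badSet l m n x ξ).ncard : ℝ) ≤
      ((min (rate F x η) (rate F x ζ)) *
        ((gPair l m n (flipAt η x) (flipAt ζ x) : ℝ) - (gPair l m n η ζ : ℝ)) +
      (rate F x η - min (rate F x η) (rate F x ζ)) *
        ((gPair l m n (flipAt η x) ζ : ℝ) - (gPair l m n η ζ : ℝ)) +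
      (rate F x ζ - min (rate F x η) (rate F x ζ)) *
        ((gPair l m n η (flipAt ζ x) : ℝ) - (gPair l m n η ζ : ℝ))) := by
    intro x _
    set cη := rate F x η with hcη
    set cζ := rate F x ζ with hcζ
    set A := min cη cζ with hA
    set D : ℝ := ((badSet l m n x ξ).ncard : ℝ) with hD
    have hD0 : 0 ≤ D := Nat.cast_nonneg _
    have hεA : ε ≤ A := le_min (hF _ _ _).1 (hF _ _ _).1
    have hA0 : 0 ≤ A := le_trans hε.le hεA
    have hηK : cη ≤ K := (hF _ _ _).2
    have hζK : cζ ≤ K := (hF _ _ _).2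
    have hBA : A ≤ cη := min_le_left _ _
    have hCA : A ≤ cζ := min_le_right _ _
    have hmax : cη + cζ - A ≤ K := by
      rcases le_total cη cζ with h | h
      · rw [hA, min_eq_left h]; linarith
      · rw [hA, min_eq_right h]; linarith
    have hΔ1 : (gPair l m n η ζ : ℝ) - D ≤ (gPair l m n (flipAt η x) ζ : ℝ) := by
      show (runCount l m n ξ : ℝ) - D ≤ (runCount l m n (discrep (flipAt η x) ζ) : ℝ)
      rw [discrep_flip_left η ζ x]
      exact runCount_update_ge hl
    have hΔ2 : (gPair l m n η ζ : ℝ) - D ≤ (gPair l m n η (flipAt ζ x) : ℝ) := by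
      show (runCount l m n ξ : ℝ) - D ≤ (runCount l m n (discrep η (flipAt ζ x)) : ℝ)
      rw [discrep_flip_right η ζ x]
      exact runCount_update_ge hl
    by_cases hP : ∃ s : ℤ, (s = 1 ∨ s = -1) ∧ IsMaxRun ξ (l + 1) m n x s
    · obtain ⟨s, hs, hrun⟩ := hP
      have hΔ0 : (gPair l m n η ζ : ℝ) + 1 - D
          ≤ (gPair l m n (flipAt η x) (flipAt ζ x) : ℝ) := by
        show (runCount l m n ξ : ℝ) + 1 - D
          ≤ (runCount l m n (discrep (flipAt η x) (flipAt ζ x)) : ℝ)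
        rw [discrep_flip_flip η ζ x]
        exact runCount_update_flip_ge hl hs hrun
      have hind : hasRunInd (l + 1) m n x ξ = 1 := by
        unfold hasRunInd; rw [if_pos ⟨s, hs, hrun⟩]
      rw [hind]
      nlinarith [mul_le_mul_of_nonneg_left hΔ0 hA0,
        mul_le_mul_of_nonneg_left hΔ1 (by linarith : (0:ℝ) ≤ cη - A),
        mul_le_mul_of_nonneg_left hΔ2 (by linarith : (0:ℝ) ≤ cζ - A),
        mul_le_mul_of_nonneg_right hmax hD0]
    · have hΔ0 : (gPair l m n η ζ : ℝ) - D
          ≤ (gPair l m n (flipAt η x) (flipAt ζ x) : ℝ) := by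
        show (runCount l m n ξ : ℝ) - D
          ≤ (runCount l m n (discrep (flipAt η x) (flipAt ζ x)) : ℝ)
        rw [discrep_flip_flip η ζ x]
        exact runCount_update_ge hl
      have hind : hasRunInd (l + 1) m n x ξ = 0 := by
        unfold hasRunInd; rw [if_neg hP]
      rw [hind]
      nlinarith [mul_le_mul_of_nonneg_left hΔ0 hA0,
        mul_le_mul_of_nonneg_left hΔ1 (by linarith : (0:ℝ) ≤ cη - A),
        mul_le_mul_of_nonneg_left hΔ2 (by linarith : (0:ℝ) ≤ cζ - A),
        mul_le_mul_of_nonneg_right hmax hD0]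
  have hsum : ∑ x ∈ Finset.Icc (m - 1) (n + 1),
      (ε * hasRunInd (l + 1) m n x ξ - K * ((badSet l m n x ξ).ncard : ℝ))
      ≤ omegaG F l m n η ζ := by
    rw [omegaG]
    exact Finset.sum_le_sum key
  rw [Finset.sum_sub_distrib, ← Finset.mul_sum, ← Finset.mul_sum] at hsum
  have hind_ge : (gPair (l + 1) m n η ζ : ℝ)
      ≤ ∑ x ∈ Finset.Icc (m - 1) (n + 1), hasRunInd (l + 1) m n x ξ :=
    runCount_le_sum_ind (by omega)
  have hbad_le : ∑ x ∈ Finset.Icc (m - 1) (n + 1), ((badSet l m n x ξ).ncard : ℝ)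
      ≤ ((l : ℝ) + 2) * (gPair l m n η ζ : ℝ) := sum_badSet_le hl
  have hlR : (1 : ℝ) ≤ (l : ℝ) := by exact_mod_cast hl
  have h1 : ε * (gPair (l + 1) m n η ζ : ℝ)
      ≤ ε * ∑ x ∈ Finset.Icc (m - 1) (n + 1), hasRunInd (l + 1) m n x ξ :=
    mul_le_mul_of_nonneg_left hind_ge hε.le
  have h2 : K * (∑ x ∈ Finset.Icc (m - 1) (n + 1), ((badSet l m n x ξ).ncard : ℝ))
      ≤ K * (((l : ℝ) + 2) * (gPair l m n η ζ : ℝ)) :=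
    mul_le_mul_of_nonneg_left hbad_le hK0
  have hcoef : K * ((l : ℝ) + 2) * (gPair l m n η ζ : ℝ)
      ≤ (2 * ε + 4 * K * (l : ℝ)) * (gPair l m n η ζ : ℝ) := by
    apply mul_le_mul_of_nonneg_right _ hg0
    nlinarith
  nlinarith
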